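/- Let Y be a p1×p2 matrix, U ∈ O(p1,r), and let Û = argmax over U' ∈ C of tr(U'ᵀ Y Yᵀ U'), where C ⊆ O(p1,r) contains U. If Y = UΓVᵀ + Z with Γ = diag(λ1,...,λr), λr > 0, and V ∈ O(p2,r), then ‖ÛÛᵀ − UUᵀ‖_F² ≤ (2/λr²)·⟨UΓ²Uᵀ − YYᵀ, UUᵀ − ÛÛᵀ⟩. -/

import Mathlib

open Matrix

/-- Frobenius norm of a real matrix. -/
noncomputable def frob {m n : ℕ} (A : Matrix (Fin m) (Fin n) ℝ) : ℝ :=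
  Real.sqrt (∑ i, ∑ j, (A i j) ^ 2)

/-- Diagonal entries of `UᵀWWᵀU` are at most 1 when `U, W` have orthonormal columns. -/
theorem aux_diag_le_one {p r : ℕ} (U W : Matrix (Fin p) (Fin r) ℝ)
    (hU : Uᵀ * U = 1) (hW : Wᵀ * W = 1) (i : Fin r) :
    ∑ j, ((Uᵀ * W) i j)^2 ≤ 1 := by
  set m : Fin r → ℝ := fun j => ∑ k, U k i * W k j with hm
  have hMm : ∀ j, (Uᵀ * W) i j = m j := by
    intro j; simp [Matrix.mul_apply, hm]
  have horth : ∀ j j', ∑ k, W k j * W k j' = if j = j' then (1:ℝ) else 0 := by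
    intro j j'
    have := congrFun (congrFun hW j) j'
    simpa [Matrix.mul_apply, Matrix.one_apply] using this
  have hcol : ∑ k, U k i * U k i = 1 := by
    have := congrFun (congrFun hU i) i
    simpa [Matrix.mul_apply, Matrix.one_apply] using this
  have hab : ∑ k, U k i * ∑ j, W k j * m j = ∑ j, m j * m j := by
    calc ∑ k, U k i * ∑ j, W k j * m j
        = ∑ k, ∑ j, U k i * W k j * m j := by
          simp_rw [Finset.mul_sum, mul_assoc]
      _ = ∑ j, ∑ k, U k i * W k j * m j := Finset.sum_comm
      _ = ∑ j, (∑ k, U k i * W k j) * m j := by simp_rw [Finset.sum_mul]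
      _ = ∑ j, m j * m j := rfl
  have hbb : ∑ k, (∑ j, W k j * m j)^2 = ∑ j, m j * m j := by
    calc ∑ k, (∑ j, W k j * m j)^2
        = ∑ k, ∑ j, ∑ j', (W k j * W k j') * (m j * m j') := by
          simp_rw [sq, Finset.sum_mul_sum]
          congr 1; ext k; congr 1; ext j; congr 1; ext j'; ring
      _ = ∑ j, ∑ j', (∑ k, W k j * W k j') * (m j * m j') := by
          rw [Finset.sum_comm]
          congr 1; ext j
          rw [Finset.sum_comm]
          simp_rw [Finset.sum_mul]
      _ = ∑ j, m j * m j := by simp [horth]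
  have hnn : 0 ≤ ∑ k, (U k i - ∑ j, W k j * m j)^2 :=
    Finset.sum_nonneg fun k _ => sq_nonneg _
  have hexp : ∑ k, (U k i - ∑ j, W k j * m j)^2
      = 1 - ∑ j, m j * m j := by
    have : ∀ k, (U k i - ∑ j, W k j * m j)^2
        = U k i * U k i - 2 * (U k i * ∑ j, W k j * m j) + (∑ j, W k j * m j)^2 := by
      intro k; ring
    simp_rw [this]
    rw [Finset.sum_add_distrib, Finset.sum_sub_distrib, hcol, ← Finset.mul_sum, hab, hbb]
    ring
  simp_rw [hMm, sq]
  nlinarith [hnn, hexp]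

/-- Trace of `UUᵀWWᵀ` as a sum of squares. -/
theorem aux_trace_proj {p r : ℕ} (U W : Matrix (Fin p) (Fin r) ℝ) :
    trace ((U * Uᵀ) * (W * Wᵀ)) = ∑ i, ∑ j, ((Uᵀ * W) i j)^2 := by
  rw [show (U * Uᵀ) * (W * Wᵀ) = U * (Uᵀ * (W * Wᵀ)) by rw [Matrix.mul_assoc],
    Matrix.trace_mul_comm,
    show (Uᵀ * (W * Wᵀ)) * U = (Uᵀ * W) * (Uᵀ * W)ᵀ by
      rw [Matrix.transpose_mul, Matrix.transpose_transpose]; simp only [Matrix.mul_assoc]]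
  simp [Matrix.trace, Matrix.mul_apply, Matrix.diag, sq, mul_comm]

/-- Trace of `U diag(g) Uᵀ W Wᵀ` as a weighted sum of squares. -/
theorem aux_trace_diag {p r : ℕ} (U W : Matrix (Fin p) (Fin r) ℝ) (g : Fin r → ℝ) :
    trace ((U * Matrix.diagonal g * Uᵀ) * (W * Wᵀ))
      = ∑ i, g i * ∑ j, ((Uᵀ * W) i j)^2 := by
  rw [show (U * Matrix.diagonal g * Uᵀ) * (W * Wᵀ)
      = U * (Matrix.diagonal g * (Uᵀ * (W * Wᵀ))) by simp only [Matrix.mul_assoc],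
    Matrix.trace_mul_comm,
    show (Matrix.diagonal g * (Uᵀ * (W * Wᵀ))) * U
      = Matrix.diagonal g * ((Uᵀ * W) * (Uᵀ * W)ᵀ) by
      rw [Matrix.transpose_mul, Matrix.transpose_transpose]; simp only [Matrix.mul_assoc]]
  simp [Matrix.trace, Matrix.mul_apply, Matrix.diag, Matrix.diagonal, Finset.mul_sum, sq,
    mul_comm, mul_left_comm]

/-- Basic inequality for the constrained estimator: if `Û` maximizes
`tr(U'ᵀYYᵀU')` over `U' ∈ C ⊆ O(p1,r)` containing `U`, and
`Y = UΓVᵀ + Z` with `Γ = diag(λ1,...,λr)`, `λ1 ≥ ... ≥ λr > 0`, then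
`‖ÛÛᵀ − UUᵀ‖_F² ≤ (2/λr²)⟨UΓ²Uᵀ − YYᵀ, UUᵀ − ÛÛᵀ⟩`. -/
theorem estimator_basic_inequality {p1 p2 r : ℕ} (hr : 0 < r)
    (C : Set (Matrix (Fin p1) (Fin r) ℝ))
    (hC : ∀ W ∈ C, Wᵀ * W = 1)
    (U Uhat : Matrix (Fin p1) (Fin r) ℝ) (hU : U ∈ C) (hUhat : Uhat ∈ C)
    (Y Z : Matrix (Fin p1) (Fin p2) ℝ)
    (V : Matrix (Fin p2) (Fin r) ℝ) (hV : Vᵀ * V = 1)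
    (l : Fin r → ℝ) (hpos : ∀ i, 0 < l i)
    (hmono : ∀ i j : Fin r, i ≤ j → l j ≤ l i)
    (hY : Y = U * diagonal l * Vᵀ + Z)
    (hmax : ∀ W ∈ C, trace (Wᵀ * (Y * Yᵀ) * W) ≤ trace (Uhatᵀ * (Y * Yᵀ) * Uhat)) :
    frob (Uhat * Uhatᵀ - U * Uᵀ) ^ 2 ≤
      2 / (l ⟨r - 1, by omega⟩) ^ 2 *
        trace ((U * diagonal (fun i => (l i) ^ 2) * Uᵀ - Y * Yᵀ)ᵀ *
          (U * Uᵀ - Uhat * Uhatᵀ)) := by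
  have hUU : Uᵀ * U = 1 := hC U hU
  have hHH : Uhatᵀ * Uhat = 1 := hC Uhat hUhat
  set lr : ℝ := l ⟨r - 1, by omega⟩ with hlrdef
  have hlrpos : 0 < lr := hpos _
  have hlrle : ∀ i : Fin r, lr ^ 2 ≤ l i ^ 2 := by
    intro i
    have h1 : lr ≤ l i := hmono i ⟨r - 1, by omega⟩ (by
      rw [Fin.le_def]; simp; omega)
    nlinarith [hpos i]
  set g : Fin r → ℝ := fun i => l i ^ 2 with hgdef
  set s : Fin r → ℝ := fun i => ∑ j, ((Uᵀ * Uhat) i j)^2 with hsdef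
  have hs1 : ∀ i, s i ≤ 1 := fun i => aux_diag_le_one U Uhat hUU hHH i
  have hone : ∀ i : Fin r, ∑ j, ((1 : Matrix (Fin r) (Fin r) ℝ) i j)^2 = 1 := by
    intro i
    simp [Matrix.one_apply, Finset.sum_ite_eq]
  -- trace identities
  have trQQ : trace ((U * Uᵀ) * (U * Uᵀ)) = (r : ℝ) := by
    rw [aux_trace_proj U U, hUU]
    simp [hone]
  have trPP : trace ((Uhat * Uhatᵀ) * (Uhat * Uhatᵀ)) = (r : ℝ) := by
    rw [aux_trace_proj Uhat Uhat, hHH]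
    simp [hone]
  have trQP : trace ((U * Uᵀ) * (Uhat * Uhatᵀ)) = ∑ i, s i :=
    aux_trace_proj U Uhat
  have trPQ : trace ((Uhat * Uhatᵀ) * (U * Uᵀ)) = ∑ i, s i := by
    rw [Matrix.trace_mul_comm]; exact trQP
  have trSQ : trace ((U * Matrix.diagonal g * Uᵀ) * (U * Uᵀ)) = ∑ i, g i := by
    rw [aux_trace_diag U U g, hUU]
    simp [hone]
  have trSP : trace ((U * Matrix.diagonal g * Uᵀ) * (Uhat * Uhatᵀ)) = ∑ i, g i * s i :=
    aux_trace_diag U Uhat g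
  -- optimality
  have hYY : trace ((Y * Yᵀ) * (U * Uᵀ)) - trace ((Y * Yᵀ) * (Uhat * Uhatᵀ)) ≤ 0 := by
    have h1 : trace ((Y * Yᵀ) * (U * Uᵀ)) = trace (Uᵀ * (Y * Yᵀ) * U) := by
      rw [show (Y * Yᵀ) * (U * Uᵀ) = ((Y * Yᵀ) * U) * Uᵀ by simp only [Matrix.mul_assoc],
        Matrix.trace_mul_comm, ← Matrix.mul_assoc]
    have h2 : trace ((Y * Yᵀ) * (Uhat * Uhatᵀ)) = trace (Uhatᵀ * (Y * Yᵀ) * Uhat) := by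
      rw [show (Y * Yᵀ) * (Uhat * Uhatᵀ) = ((Y * Yᵀ) * Uhat) * Uhatᵀ by simp only [Matrix.mul_assoc],
        Matrix.trace_mul_comm, ← Matrix.mul_assoc]
    rw [h1, h2, sub_nonpos]
    exact hmax U hU
  -- symmetry of the difference matrix
  have hsym : ∀ a b, (Uhat * Uhatᵀ - U * Uᵀ) a b = (Uhat * Uhatᵀ - U * Uᵀ) b a := by
    intro a b
    simp [Matrix.sub_apply, Matrix.mul_apply, mul_comm]
  -- LHS computation
  have hfrob : frob (Uhat * Uhatᵀ - U * Uᵀ) ^ 2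
      = ∑ i, ∑ j, ((Uhat * Uhatᵀ - U * Uᵀ) i j)^2 := by
    rw [frob, Real.sq_sqrt]
    exact Finset.sum_nonneg fun i _ => Finset.sum_nonneg fun j _ => sq_nonneg _
  have hLHS : frob (Uhat * Uhatᵀ - U * Uᵀ) ^ 2 = 2 * (r : ℝ) - 2 * ∑ i, s i := by
    rw [hfrob]
    have h1 : ∑ i, ∑ j, ((Uhat * Uhatᵀ - U * Uᵀ) i j)^2
        = trace ((Uhat * Uhatᵀ - U * Uᵀ) * (Uhat * Uhatᵀ - U * Uᵀ)) := by
      simp only [Matrix.trace, Matrix.diag, Matrix.mul_apply]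
      refine Finset.sum_congr rfl fun i _ => Finset.sum_congr rfl fun j _ => ?_
      rw [sq, hsym j i]
    rw [h1, Matrix.sub_mul, Matrix.mul_sub, Matrix.mul_sub, Matrix.trace_sub,
      Matrix.trace_sub, Matrix.trace_sub, trPP, trPQ, trQP, trQQ]
    ring
  -- RHS trace computation
  have hT : trace ((U * diagonal (fun i => (l i) ^ 2) * Uᵀ - Y * Yᵀ)ᵀ *
        (U * Uᵀ - Uhat * Uhatᵀ))
      = (∑ i, g i - ∑ i, g i * s i)
        - (trace ((Y * Yᵀ) * (U * Uᵀ)) - trace ((Y * Yᵀ) * (Uhat * Uhatᵀ))) := by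
    have hTsym : (U * diagonal (fun i => (l i) ^ 2) * Uᵀ - Y * Yᵀ)ᵀ
        = U * Matrix.diagonal g * Uᵀ - Y * Yᵀ := by
      rw [Matrix.transpose_sub, Matrix.transpose_mul, Matrix.transpose_mul,
        Matrix.transpose_mul, Matrix.transpose_transpose, Matrix.transpose_transpose,
        Matrix.diagonal_transpose]
      rw [Matrix.mul_assoc]
    rw [hTsym, Matrix.sub_mul, Matrix.mul_sub, Matrix.mul_sub, Matrix.trace_sub,
      Matrix.trace_sub, Matrix.trace_sub, trSQ, trSP]
  -- curvature bound
  have hcurv : lr ^ 2 * ((r : ℝ) - ∑ i, s i) ≤ ∑ i, g i - ∑ i, g i * s i := by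
    have h1 : ∑ i, g i - ∑ i, g i * s i = ∑ i, g i * (1 - s i) := by
      rw [← Finset.sum_sub_distrib]
      refine Finset.sum_congr rfl fun i _ => by ring
    have h2 : lr ^ 2 * ((r : ℝ) - ∑ i, s i) = ∑ i : Fin r, lr ^ 2 * (1 - s i) := by
      rw [← Finset.mul_sum, Finset.sum_sub_distrib]
      simp
    rw [h1, h2]
    refine Finset.sum_le_sum fun i _ => ?_
    show lr ^ 2 * (1 - s i) ≤ l i ^ 2 * (1 - s i)
    nlinarith [mul_nonneg (sub_nonneg.2 (hlrle i)) (sub_nonneg.2 (hs1 i))]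
  -- finish
  rw [hLHS, hT]
  have hlr2 : (0:ℝ) < lr ^ 2 := by positivity
  have key : lr ^ 2 * ((r : ℝ) - ∑ i, s i)
      ≤ (∑ i, g i - ∑ i, g i * s i)
        - (trace ((Y * Yᵀ) * (U * Uᵀ)) - trace ((Y * Yᵀ) * (Uhat * Uhatᵀ))) := by
    linarith [hcurv, hYY]
  have h2 : 2 / lr ^ 2 * (lr ^ 2 * ((r : ℝ) - ∑ i, s i))
      = 2 * (r : ℝ) - 2 * ∑ i, s i := by
    field_simp
  calc 2 * (r : ℝ) - 2 * ∑ i, s i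
      = 2 / lr ^ 2 * (lr ^ 2 * ((r : ℝ) - ∑ i, s i)) := h2.symm
    _ ≤ _ := by
        apply mul_le_mul_of_nonneg_left key
        positivity
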